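/- Let Ψ(t) = x + y_1 t^{k_1} + ... + y_L t^{k_L} with x, y_L ≠ 0 and 0 < k_1 < ... < k_L, and let z_1, ..., z_{k_L} be its roots ordered by decreasing modulus. Then there is a constant C depending only on k_1,...,k_L such that within each 'block' between consecutive critical indices the root moduli are comparable: for every 0 ≤ i ≤ L-1 and every pair of indices a, b with D_i < a, b ≤ D_{i+1} (where D_i = k_L - k_{L-i}, k_0 = 0), one has |z_a| ≤ C |z_b|. -/

import Mathlib

open Finset Polynomial

lemma my_le_orderEmb {c : ℕ} {f : Fin c → ℕ} (hf : StrictMono f) :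
    ∀ (m : ℕ) (h : m < c), m ≤ f ⟨m, h⟩ := by
  intro m
  induction m with
  | zero => intro h; exact Nat.zero_le _
  | succ m ih =>
    intro h
    have h' : m < c := Nat.lt_of_succ_lt h
    have h2 : f ⟨m, h'⟩ < f ⟨m+1, h⟩ := hf (by simp [Fin.lt_def])
    have h3 := ih h'
    omega

lemma my_prod_le {w : ℕ → ℝ} (hw0 : ∀ i, 0 ≤ w i) (hw : ∀ i j, i ≤ j → w j ≤ w i)
    (A : Finset ℕ) (c : ℕ) (hA : A.card = c) :
    ∏ i ∈ A, w i ≤ ∏ i ∈ Finset.range c, w i := by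
  have hbij : ∏ i ∈ A, w i = ∏ t : Fin c, w (A.orderEmbOfFin hA t) := by
    refine (Finset.prod_bij (fun t _ => A.orderEmbOfFin hA t) ?_ ?_ ?_ ?_).symm
    · intro t _; exact Finset.orderEmbOfFin_mem _ _ _
    · intro t1 _ t2 _ h; exact (A.orderEmbOfFin hA).injective h
    · intro b hb
      have : b ∈ Set.range (A.orderEmbOfFin hA) := by
        rw [Finset.range_orderEmbOfFin]; exact hb
      obtain ⟨t, ht⟩ := this
      exact ⟨t, Finset.mem_univ t, ht⟩
    · intro t _; rfl
  rw [hbij, ← Fin.prod_univ_eq_prod_range]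
  apply Finset.prod_le_prod
  · intro t _; exact hw0 _
  · intro t _
    exact hw _ _ (my_le_orderEmb (A.orderEmbOfFin hA).strictMono t.1 t.2)

lemma my_one_step {n j : ℕ} {z : ℕ → ℂ} (hj1 : 1 ≤ j) (hjn : j < n)
    (hord : ∀ a b, 1 ≤ a → a ≤ b → b ≤ n → ‖z b‖ ≤ ‖z a‖)
    (hsum : ∑ A ∈ (Finset.range n).powersetCard j, ∏ i ∈ A, z (i + 1) = 0) :
    ‖z j‖ ≤ 2 ^ n * ‖z (j + 1)‖ := by
  set w : ℕ → ℝ := fun i => ‖z (min (i + 1) n)‖ with hw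
  have hw0 : ∀ i, 0 ≤ w i := fun i => norm_nonneg _
  have hwanti : ∀ i j, i ≤ j → w j ≤ w i := by
    intro i j hij
    exact hord _ _ (le_min (by omega) (by omega)) (by omega) (min_le_right _ _)
  have hweq : ∀ i, i < n → w i = ‖z (i + 1)‖ := by
    intro i hi; simp only [hw]; rw [min_eq_left (by omega)]
  have habsprod : ∀ A : Finset ℕ, A ⊆ Finset.range n →
      ‖∏ i ∈ A, z (i + 1)‖ = ∏ i ∈ A, w i := by
    intro A hA
    rw [norm_prod]
    exact Finset.prod_congr rfl fun i hi =>
      (hweq i (Finset.mem_range.mp (hA hi))).symm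
  set s := (Finset.range n).powersetCard j with hs
  set A0 := Finset.range j with hA0def
  have hA0 : A0 ∈ s := Finset.mem_powersetCard.mpr
    ⟨Finset.range_subset_range.mpr hjn.le, Finset.card_range j⟩
  set Q : ℝ := ∏ i ∈ Finset.range (j - 1), w i with hQ
  have hQ0 : 0 ≤ Q := Finset.prod_nonneg fun i _ => hw0 i
  -- the value of the main term
  have hmain : ‖∏ i ∈ A0, z (i + 1)‖ = Q * w (j - 1) := by
    rw [habsprod A0 (Finset.range_subset_range.mpr hjn.le), hA0def]
    have : j = (j - 1) + 1 := by omega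
    rw [this, Finset.prod_range_succ]
    norm_num
    exact Or.inl rfl
  -- bound each other term
  have hterm : ∀ A ∈ s.erase A0, ‖∏ i ∈ A, z (i + 1)‖ ≤ Q * w j := by
    intro A hA
    have hAne : A ≠ A0 := Finset.ne_of_mem_erase hA
    have hAs : A ∈ s := Finset.mem_of_mem_erase hA
    obtain ⟨hAsub, hAcard⟩ := Finset.mem_powersetCard.mp hAs
    have hne : A.Nonempty := Finset.card_pos.mp (by omega)
    set m := A.max' hne with hm
    have hmA : m ∈ A := A.max'_mem hne
    have hmn : m < n := Finset.mem_range.mp (hAsub hmA)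
    have hjm : j ≤ m := by
      by_contra hlt
      push_neg at hlt
      have hsub : A ⊆ A0 := by
        intro x hx
        exact Finset.mem_range.mpr (lt_of_le_of_lt (A.le_max' x hx) hlt)
      exact hAne (Finset.eq_of_subset_of_card_le hsub
        (by rw [hAcard, hA0def, Finset.card_range]))
    rw [habsprod A hAsub, ← Finset.mul_prod_erase A w hmA, mul_comm]
    have h1 : ∏ i ∈ A.erase m, w i ≤ Q :=
      my_prod_le hw0 hwanti _ _ (by rw [Finset.card_erase_of_mem hmA, hAcard])
    have h2 : w m ≤ w j := hwanti _ _ hjm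
    exact mul_le_mul h1 h2 (hw0 m) hQ0
  have hcard : ((s.erase A0).card : ℝ) ≤ 2 ^ n := by
    have h1 : (s.erase A0).card ≤ s.card := Finset.card_le_card (Finset.erase_subset _ _)
    have h2 : s.card ≤ (Finset.range n).powerset.card := by
      apply Finset.card_le_card
      intro A hA
      exact Finset.mem_powerset.mpr (Finset.mem_powersetCard.mp hA).1
    rw [Finset.card_powerset, Finset.card_range] at h2
    calc ((s.erase A0).card : ℝ) ≤ (2 ^ n : ℕ) := by exact_mod_cast le_trans h1 h2
      _ = 2 ^ n := by push_cast; ring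
  -- main inequality
  have hkey : Q * w (j - 1) ≤ 2 ^ n * (Q * w j) := by
    have hsplit : (∏ i ∈ A0, z (i + 1)) = -∑ A ∈ s.erase A0, ∏ i ∈ A, z (i + 1) := by
      have := Finset.add_sum_erase s (fun A => ∏ i ∈ A, z (i + 1)) hA0
      rw [hsum] at this
      linear_combination this
    calc Q * w (j - 1) = ‖∏ i ∈ A0, z (i + 1)‖ := hmain.symm
      _ = ‖∑ A ∈ s.erase A0, ∏ i ∈ A, z (i + 1)‖ := by rw [hsplit, norm_neg]
      _ ≤ ∑ A ∈ s.erase A0, ‖∏ i ∈ A, z (i + 1)‖ :=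
          norm_sum_le _ _
      _ ≤ ∑ _A ∈ s.erase A0, Q * w j := Finset.sum_le_sum hterm
      _ = ((s.erase A0).card : ℝ) * (Q * w j) := by rw [Finset.sum_const, nsmul_eq_mul]
      _ ≤ 2 ^ n * (Q * w j) := by
          apply mul_le_mul_of_nonneg_right hcard (mul_nonneg hQ0 (hw0 j))
  have hzj : ‖z j‖ = w (j - 1) := by
    rw [hweq (j - 1) (by omega)]; congr 2; omega
  have hzj1 : ‖z (j + 1)‖ = w j := (hweq j hjn).symm
  rw [hzj, hzj1]
  rcases eq_or_lt_of_le hQ0 with hQz | hQpos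
  · -- Q = 0 : some earlier root is zero hence w (j-1) = 0
    have : ∃ i ∈ Finset.range (j - 1), w i = 0 := by
      by_contra hno
      push_neg at hno
      exact absurd (Finset.prod_eq_zero_iff.mp hQz.symm) (by
        rintro ⟨i, hi, h0⟩; exact hno i hi h0)
    obtain ⟨i, hi, h0⟩ := this
    have hi' : i < j - 1 := Finset.mem_range.mp hi
    have : w (j - 1) ≤ w i := hwanti _ _ (by omega)
    have : w (j - 1) = 0 := le_antisymm (h0 ▸ this) (hw0 _)
    rw [this]
    positivity
  · rw [show (2:ℝ) ^ n * (Q * w j) = Q * (2 ^ n * w j) by ring] at hkey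
    exact le_of_mul_le_mul_left hkey hQpos


/-- Block comparability of root moduli: for a sparse polynomial with exponents
`0 = k₀ < k₁ < ... < k_L`, there is a constant `C` depending only on the exponents
such that for every `0 ≤ i ≤ L-1` and all indices `a, b` with
`D_i < a, b ≤ D_{i+1}` (where `D_i = k_L - k_{L-i}`), `|z_a| ≤ C |z_b|` for the
roots `z₁, z₂, ...` ordered by decreasing modulus. -/
theorem stmt10 (L : ℕ) (hL : 1 ≤ L) (k : ℕ → ℕ)
    (hk0 : k 0 = 0) (hkmono : ∀ i, i < L → k i < k (i + 1)) :
    ∃ C : ℝ, 0 < C ∧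
      ∀ (y : ℕ → ℂ) (Ψ : Polynomial ℂ) (z : ℕ → ℂ),
        y 0 ≠ 0 → y L ≠ 0 →
        Ψ = ∑ i ∈ Finset.range (L + 1), Polynomial.C (y i) * Polynomial.X ^ (k i) →
        Ψ.roots = (Multiset.range (k L)).map (fun i => z (i + 1)) →
        (∀ a b, 1 ≤ a → a ≤ b → b ≤ k L → ‖z b‖ ≤ ‖z a‖) →
        ∀ i, i < L → ∀ a b : ℕ,
          k L - k (L - i) < a → a ≤ k L - k (L - (i + 1)) →
          k L - k (L - i) < b → b ≤ k L - k (L - (i + 1)) →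
          ‖z a‖ ≤ C * ‖z b‖ := by
  set n := k L with hn
  -- strict monotonicity of k on [0, L]
  have hsm : ∀ s t : ℕ, s < t → t ≤ L → k s < k t := by
    intro s t hst htL
    induction t with
    | zero => omega
    | succ t ih =>
      rcases Nat.lt_or_ge s t with h | h
      · exact lt_trans (ih h (by omega)) (hkmono t (by omega))
      · have : s = t := by omega
        subst this
        exact hkmono s (by omega)
  have hkle : ∀ t : ℕ, t ≤ L → k t ≤ n := by
    intro t htL
    rcases eq_or_lt_of_le htL with h | h
    · subst h; rfl
    · exact (hsm t L h le_rfl).le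
  have hn1 : 1 ≤ n := by
    have := hsm 0 L (by omega) le_rfl
    omega
  refine ⟨((2:ℝ) ^ n) ^ n, by positivity, ?_⟩
  have hC1 : (1:ℝ) ≤ ((2:ℝ) ^ n) ^ n := one_le_pow₀ (one_le_pow₀ one_le_two)
  intro y Ψ z hy0 hyL hΨ hroots hord i hiL a b ha1 ha2 hb1 hb2
  -- basic facts about Ψ
  have hcoeff : ∀ m : ℕ, Ψ.coeff m = ∑ t ∈ Finset.range (L + 1), if k t = m then y t else 0 := by
    intro m
    rw [hΨ, Polynomial.finset_sum_coeff]
    refine Finset.sum_congr rfl fun t _ => ?_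
    rw [Polynomial.coeff_C_mul, Polynomial.coeff_X_pow]
    rcases eq_or_ne (k t) m with h | h
    · simp [h]
    · simp [h, Ne.symm h]
  have hcoeffn : Ψ.coeff n = y L := by
    rw [hcoeff n]
    rw [Finset.sum_eq_single_of_mem L (Finset.self_mem_range_succ L)]
    · simp [hn]
    · intro t ht htL
      have htm := Finset.mem_range.mp ht
      have : k t < n := hsm t L (by omega) le_rfl
      simp [Nat.ne_of_lt this]
  have hdegle : Ψ.natDegree ≤ n := by
    rw [hΨ]
    apply Polynomial.natDegree_sum_le_of_forall_le
    intro t ht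
    exact le_trans (Polynomial.natDegree_C_mul_X_pow_le _ _)
      (hkle t (by have := Finset.mem_range.mp ht; omega))
  have hdeg : Ψ.natDegree = n :=
    le_antisymm hdegle (Polynomial.le_natDegree_of_ne_zero (hcoeffn ▸ hyL))
  have hlead : Ψ.leadingCoeff = y L := by
    rw [Polynomial.leadingCoeff, hdeg, hcoeffn]
  have hcard : Multiset.card Ψ.roots = Ψ.natDegree := by
    rw [hroots, hdeg, Multiset.card_map, Multiset.card_range]
  -- vanishing of esymm at non-critical indices
  have hzero : ∀ j : ℕ, n - k (L - i) < j → j < n - k (L - (i + 1)) →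
      ∑ A ∈ (Finset.range n).powersetCard j, ∏ l ∈ A, z (l + 1) = 0 := by
    intro j hj1 hj2
    have hk1 : k (L - i) ≤ n := hkle _ (by omega)
    have hk2 : k (L - (i + 1)) ≤ n := hkle _ (by omega)
    have hjn : j < n := by omega
    have hm1 : k (L - (i + 1)) < n - j := by omega
    have hm2 : n - j < k (L - i) := by omega
    have hcz : Ψ.coeff (n - j) = 0 := by
      rw [hcoeff]
      apply Finset.sum_eq_zero
      intro t ht
      have htL : t ≤ L := by have := Finset.mem_range.mp ht; omega
      have : k t ≠ n - j := by
        intro he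
        rcases Nat.lt_trichotomy t (L - (i + 1)) with h | h | h
        · have := hsm t (L - (i+1)) h (by omega); omega
        · subst h; omega
        · rcases Nat.lt_trichotomy t (L - i) with h' | h' | h'
          · -- L - (i+1) < t < L - i : impossible since they differ by 1
            omega
          · subst h'; omega
          · have := hsm (L - i) t h' htL; omega
      simp [this]
    have hmle : n - j ≤ Ψ.natDegree := by omega
    have := Polynomial.coeff_eq_esymm_roots_of_card hcard hmle
    rw [hcz, hdeg, hlead] at this
    have hnj : n - (n - j) = j := by omega
    rw [hnj] at this
    have hes : Ψ.roots.esymm j = 0 := by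
      have hne : (y L) * (-1 : ℂ) ^ j ≠ 0 := by
        apply mul_ne_zero hyL
        exact pow_ne_zero _ (by norm_num)
      have := this.symm
      rw [mul_assoc] at this
      rcases mul_eq_zero.mp this with h | h
      · exact absurd h hyL
      · rcases mul_eq_zero.mp h with h' | h'
        · exact absurd h' (pow_ne_zero _ (by norm_num))
        · exact h'
    rw [hroots] at hes
    rw [← Finset.range_val, Finset.esymm_map_val] at hes
    exact hes
  -- block bounds
  have hDle : n - k (L - (i + 1)) ≤ n := Nat.sub_le _ _
  -- chaining within a block
  have hchain : ∀ d a : ℕ, n - k (L - i) < a → a + d ≤ n - k (L - (i + 1)) →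
      ‖z a‖ ≤ ((2:ℝ) ^ n) ^ d * ‖z (a + d)‖ := by
    intro d
    induction d with
    | zero => intro a _ _; simp
    | succ d ih =>
      intro a haD haD2
      have ha1' : 1 ≤ a := by omega
      have han : a < n := by omega
      have hstep : ‖z a‖ ≤ 2 ^ n * ‖z (a + 1)‖ :=
        my_one_step ha1' han hord (hzero a haD (by omega))
      have hih : ‖z (a + 1)‖ ≤ ((2:ℝ) ^ n) ^ d * ‖z (a + 1 + d)‖ :=
        ih (a + 1) (by omega) (by omega)
      calc ‖z a‖ ≤ 2 ^ n * ‖z (a + 1)‖ := hstep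
        _ ≤ 2 ^ n * (((2:ℝ) ^ n) ^ d * ‖z (a + 1 + d)‖) := by
            apply mul_le_mul_of_nonneg_left hih (by positivity)
        _ = ((2:ℝ) ^ n) ^ (d + 1) * ‖z (a + (d + 1))‖ := by
            rw [show a + 1 + d = a + (d + 1) by omega]; ring
  rcases le_or_gt a b with hab | hab
  · have := hchain (b - a) a ha1 (by omega)
    rw [show a + (b - a) = b by omega] at this
    refine this.trans ?_
    apply mul_le_mul_of_nonneg_right _ (norm_nonneg _)
    have h2n : (1:ℝ) ≤ (2:ℝ) ^ n := one_le_pow₀ one_le_two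
    exact pow_le_pow_right₀ h2n (by omega)
  · have hzab : ‖z a‖ ≤ ‖z b‖ :=
      hord b a (by omega) hab.le (by omega)
    refine hzab.trans ?_
    exact le_mul_of_one_le_left (norm_nonneg _) hC1
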